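/- Let q > 0 be a real number, and for x > 0 and t > 1 let R_q(x,t) = (t−1)coth((t−1)x) − (q+1)tanh(x) + (q−t)tanh(tx). Let k and ℓ be real numbers with 1 < k < ℓ and such that either 0 < q ≤ 2, or q > 2 and k ≥ 1 + (3/4)(q−2). Then for every x > 0, R_q(x,ℓ) < R_q(x,k). -/

import Mathlib

set_option maxHeartbeats 1000000

open Real

/-- The function `R_q(x,t)` defined for `x > 0`, `t > 1`. -/
noncomputable def Rq (q x t : ℝ) : ℝ :=
  (t - 1) * (Real.cosh ((t - 1) * x) / Real.sinh ((t - 1) * x)) -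
    (q + 1) * Real.tanh x + (q - t) * Real.tanh (t * x)

/-- `sinh u ≤ u * cosh u` for `u ≥ 0`. -/
lemma lemA : ∀ u : ℝ, 0 ≤ u → Real.sinh u ≤ u * Real.cosh u := by
  have hmono : Monotone (fun w : ℝ => w * Real.cosh w - Real.sinh w) := by
    apply monotone_of_hasDerivAt_nonneg (f' := fun w => w * Real.sinh w)
    · intro w
      have h1 : HasDerivAt (fun w : ℝ => w * Real.cosh w)
          (1 * Real.cosh w + w * Real.sinh w) w :=
        (hasDerivAt_id w).mul (Real.hasDerivAt_cosh w)
      have h2 := h1.sub (Real.hasDerivAt_sinh w)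
      exact h2.congr_deriv (by ring)
    · intro w
      rcases le_or_gt 0 w with hw | hw
      · have hs : 0 ≤ Real.sinh w := by
          simpa [Real.sinh_zero] using Real.sinh_le_sinh.mpr hw
        exact mul_nonneg hw hs
      · have hs : Real.sinh w ≤ 0 := by
          simpa [Real.sinh_zero] using Real.sinh_le_sinh.mpr hw.le
        show (0:ℝ) ≤ w * Real.sinh w
        nlinarith
  intro u hu
  have := hmono hu
  simpa using this

/-- `u * sinh u ^ 2 ≤ 3 * (u * cosh u − sinh u) * cosh u` for `u ≥ 0`. -/
lemma lemB : ∀ u : ℝ, 0 ≤ u →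
    u * Real.sinh u ^ 2 ≤ 3 * (u * Real.cosh u - Real.sinh u) * Real.cosh u := by
  have hmono : Monotone (fun w : ℝ =>
      3 * (w * Real.cosh w - Real.sinh w) * Real.cosh w - w * Real.sinh w ^ 2) := by
    apply monotone_of_hasDerivAt_nonneg
      (f' := fun w => 4 * Real.sinh w * (w * Real.cosh w - Real.sinh w))
    · intro w
      have h1 : HasDerivAt (fun w : ℝ => w * Real.cosh w - Real.sinh w)
          (1 * Real.cosh w + w * Real.sinh w - Real.cosh w) w :=
        ((hasDerivAt_id w).mul (Real.hasDerivAt_cosh w)).sub (Real.hasDerivAt_sinh w)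
      have h2 : HasDerivAt (fun w : ℝ => 3 * (w * Real.cosh w - Real.sinh w))
          (3 * (1 * Real.cosh w + w * Real.sinh w - Real.cosh w)) w := h1.const_mul 3
      have h3 := h2.mul (Real.hasDerivAt_cosh w)
      have h4 : HasDerivAt (fun w : ℝ => Real.sinh w ^ 2)
          (2 * Real.sinh w * Real.cosh w) w := by
        have := (Real.hasDerivAt_sinh w).pow 2
        exact this.congr_deriv (by simp)
      have h5 := ((hasDerivAt_id w).mul h4)
      have h6 := h3.sub h5
      exact h6.congr_deriv (by simp only [id_eq]; ring)
    · intro w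
      show (0:ℝ) ≤ 4 * Real.sinh w * (w * Real.cosh w - Real.sinh w)
      rcases le_or_gt 0 w with hw | hw
      · have := lemA w hw
        have hs : 0 ≤ Real.sinh w := by
          simpa [Real.sinh_zero] using Real.sinh_le_sinh.mpr hw
        nlinarith
      · have hs : Real.sinh w ≤ 0 := by
          simpa [Real.sinh_zero] using Real.sinh_le_sinh.mpr hw.le
        have hA := lemA (-w) (by linarith)
        rw [Real.sinh_neg, Real.cosh_neg] at hA
        nlinarith
  intro u hu
  have := hmono hu
  norm_num [Real.cosh_zero, Real.sinh_zero] at this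
  linarith [this]

/-- Key negativity of the `t`-derivative of `Rq`. -/
lemma key' (c u x : ℝ) (hu : 0 < u) (hx : 0 < x) (hc : c * x ≤ u / 3 + x) :
    Real.cosh u / Real.sinh u - u / Real.sinh u ^ 2
      - Real.sinh (u + x) / Real.cosh (u + x) + c * (x / Real.cosh (u + x) ^ 2) < 0 := by
  have hsu : 0 < Real.sinh u := Real.sinh_pos_iff.mpr hu
  have hcu : 1 ≤ Real.cosh u := Real.one_le_cosh u
  have hcv : 1 ≤ Real.cosh (u + x) := Real.one_le_cosh (u + x)
  have hcup : 0 < Real.cosh u := by linarith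
  have hcvp : 0 < Real.cosh (u + x) := by linarith
  have hsx : 0 < Real.sinh x := Real.sinh_pos_iff.mpr hx
  have hcx : 1 ≤ Real.cosh x := Real.one_le_cosh x
  have hcveq : Real.cosh (u + x) = Real.cosh u * Real.cosh x + Real.sinh u * Real.sinh x :=
    Real.cosh_add u x
  have hsveq : Real.sinh (u + x) = Real.sinh u * Real.cosh x + Real.cosh u * Real.sinh x :=
    Real.sinh_add u x
  have hcuv : Real.cosh u ≤ Real.cosh (u + x) := by nlinarith
  have hcc : Real.cosh u * Real.cosh x ≤ Real.cosh (u + x) := by nlinarith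
  have hxsc : x < Real.sinh x * Real.cosh x := by
    have h1 : x < Real.sinh x := (Real.self_lt_sinh_iff).mpr hx
    nlinarith
  have hA := lemA u hu.le
  have hB := lemB u hu.le
  have pyu := Real.cosh_sq_sub_sinh_sq u
  -- identity 1
  have id1 : Real.cosh u / Real.sinh u - u / Real.sinh u ^ 2
      = Real.sinh u / Real.cosh u
          - (u * Real.cosh u - Real.sinh u) / (Real.sinh u ^ 2 * Real.cosh u) := by
    field_simp
    linear_combination Real.sinh u * pyu
  -- identity 2
  have hnum : Real.sinh (u + x) * Real.cosh u - Real.sinh u * Real.cosh (u + x)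
      = Real.sinh x := by
    rw [hsveq, hcveq]
    linear_combination Real.sinh x * pyu
  have id2 : Real.sinh (u + x) / Real.cosh (u + x)
      = Real.sinh u / Real.cosh u
        + Real.sinh x / (Real.cosh u * Real.cosh (u + x)) := by
    field_simp
    linear_combination hnum
  -- main inequality
  have m3 : x / Real.cosh (u + x) ^ 2 < Real.sinh x / (Real.cosh u * Real.cosh (u + x)) := by
    rw [div_lt_div_iff₀ (by positivity) (by positivity)]
    nlinarith [mul_lt_mul_of_pos_right hxsc (mul_pos hcup hcvp),
      mul_le_mul_of_nonneg_right hcc (le_of_lt (mul_pos hsx hcvp))]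
  have m4 : u / (3 * Real.cosh (u + x) ^ 2)
      ≤ (u * Real.cosh u - Real.sinh u) / (Real.sinh u ^ 2 * Real.cosh u) := by
    rw [div_le_div_iff₀ (by positivity) (by positivity)]
    have hcv2 : Real.cosh u ^ 2 ≤ Real.cosh (u + x) ^ 2 := by nlinarith
    nlinarith [mul_le_mul_of_nonneg_right hB hcup.le,
      mul_le_mul_of_nonneg_left hcv2
        (by nlinarith : (0:ℝ) ≤ 3 * (u * Real.cosh u - Real.sinh u))]
  have m1 : c * (x / Real.cosh (u + x) ^ 2)
      ≤ (u / 3 + x) / Real.cosh (u + x) ^ 2 := by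
    rw [mul_div_assoc']
    gcongr
  have m2 : (u / 3 + x) / Real.cosh (u + x) ^ 2
      = u / (3 * Real.cosh (u + x) ^ 2) + x / Real.cosh (u + x) ^ 2 := by
    ring
  linarith [m1, m2, m3, m4, id1, id2]

/-- Derivative of `Rq q x` in `t`. -/
lemma Rq_hasDerivAt (q x t : ℝ) (hx : 0 < x) (ht : 1 < t) :
    HasDerivAt (fun s => Rq q x s)
      (Real.cosh ((t-1)*x) / Real.sinh ((t-1)*x) - (t-1)*x / Real.sinh ((t-1)*x) ^ 2
        - Real.sinh (t*x) / Real.cosh (t*x) + (q - t) * (x / Real.cosh (t*x) ^ 2)) t := by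
  have hup : 0 < (t - 1) * x := by apply mul_pos <;> linarith
  have hsu : Real.sinh ((t-1)*x) ≠ 0 := (Real.sinh_pos_iff.mpr hup).ne'
  have hcv : Real.cosh (t*x) ≠ 0 := (Real.cosh_pos (t*x)).ne'
  simp only [Rq, Real.tanh_eq_sinh_div_cosh]
  have h1 : HasDerivAt (fun s : ℝ => (s - 1) * x) x t := by
    simpa using ((hasDerivAt_id t).sub_const 1).mul_const x
  have hs1 : HasDerivAt (fun s : ℝ => Real.sinh ((s-1)*x)) (Real.cosh ((t-1)*x) * x) t :=
    (Real.hasDerivAt_sinh ((t-1)*x)).comp (h := fun s : ℝ => (s - 1) * x) t h1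
  have hc1 : HasDerivAt (fun s : ℝ => Real.cosh ((s-1)*x)) (Real.sinh ((t-1)*x) * x) t :=
    (Real.hasDerivAt_cosh ((t-1)*x)).comp (h := fun s : ℝ => (s - 1) * x) t h1
  have hq1 := hc1.div hs1 hsu
  have hterm1 := (((hasDerivAt_id t).sub_const 1)).mul hq1
  have h2 : HasDerivAt (fun s : ℝ => s * x) x t := by
    simpa using (hasDerivAt_id t).mul_const x
  have hs2 : HasDerivAt (fun s : ℝ => Real.sinh (s*x)) (Real.cosh (t*x) * x) t :=
    (Real.hasDerivAt_sinh (t*x)).comp (h := fun s : ℝ => s * x) t h2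
  have hc2 : HasDerivAt (fun s : ℝ => Real.cosh (s*x)) (Real.sinh (t*x) * x) t :=
    (Real.hasDerivAt_cosh (t*x)).comp (h := fun s : ℝ => s * x) t h2
  have hq2 := hs2.div hc2 hcv
  have hterm3 := ((hasDerivAt_const t q).sub (hasDerivAt_id t)).mul hq2
  have htotal := (hterm1.sub_const ((q + 1) * (Real.sinh x / Real.cosh x))).add hterm3
  refine htotal.congr_deriv ?_
  have e1 : Real.sinh ((t-1)*x) * x * Real.sinh ((t-1)*x)
      - Real.cosh ((t-1)*x) * (Real.cosh ((t-1)*x) * x) = -x := by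
    linear_combination (-x) * Real.cosh_sq_sub_sinh_sq ((t-1)*x)
  have e2 : Real.cosh (t*x) * x * Real.cosh (t*x)
      - Real.sinh (t*x) * (Real.sinh (t*x) * x) = x := by
    linear_combination x * Real.cosh_sq_sub_sinh_sq (t*x)
  rw [e1, e2]
  simp only [Pi.div_apply, Pi.sub_apply, id_eq]
  field_simp
  ring

/-- If `1 < k < ℓ` and either `0 < q ≤ 2`, or `q > 2` and `k ≥ 1 + (3/4)(q−2)`,
then `R_q(x,ℓ) < R_q(x,k)` for every `x > 0`. -/
theorem Rq_lt (q k ℓ : ℝ) (hq : 0 < q) (hk : 1 < k) (hkl : k < ℓ)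
    (h : q ≤ 2 ∨ (2 < q ∧ 1 + 3 / 4 * (q - 2) ≤ k)) :
    ∀ x : ℝ, 0 < x → Rq q x ℓ < Rq q x k := by
  intro x hx
  have hSA : StrictAntiOn (fun t => Rq q x t) (Set.Icc k ℓ) := by
    apply strictAntiOn_of_deriv_neg (convex_Icc k ℓ)
    · intro t htI
      have ht : 1 < t := lt_of_lt_of_le hk htI.1
      exact (Rq_hasDerivAt q x t hx ht).continuousAt.continuousWithinAt
    · intro t htI
      rw [interior_Icc] at htI
      have ht : 1 < t := lt_of_lt_of_le hk htI.1.le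
      have hqt : 3 * (q - t) ≤ t + 2 := by
        rcases h with h1 | ⟨h1, h2⟩
        · linarith [htI.1]
        · linarith [htI.1]
      rw [(Rq_hasDerivAt q x t hx ht).deriv]
      have hvt : t * x = (t - 1) * x + x := by ring
      rw [hvt]
      apply key' (q - t) ((t - 1) * x) x (by apply mul_pos <;> linarith) hx
      nlinarith [mul_le_mul_of_nonneg_right (show q - t ≤ (t + 2) / 3 by linarith) hx.le]
  exact hSA ⟨le_refl k, hkl.le⟩ ⟨hkl.le, le_refl ℓ⟩ hkl
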